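/- The shuffle product of two elements of V is again an element of V, i.e., the symmetrization in the definition of F * F' yields a symmetric Laurent polynomial (all apparent simple poles at z_{i,a} = z_{i,b} cancel upon symmetrization). -/

import Mathlib

set_option linter.unusedSectionVars false

open MvPolynomial

noncomputable section

variable (F : Type) [Field F] [CharZero F]
variable (I : Type) [Fintype I] [DecidableEq I]
variable (E : Type) [Fintype E] [DecidableEq E]

/-- The field of rational functions in the variables `z_{i,a}`, `i ∈ I`, `a ∈ ℕ`. -/
abbrev KK := FractionRing (MvPolynomial (I × ℕ) F)

/-- The variable `z_{i,a}` as an element of `KK`. -/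
def zVar (v : I × ℕ) : KK F I := algebraMap (MvPolynomial (I × ℕ) F) (KK F I) (X v)

/-- Scalars from `F` inside `KK`. -/
def cst (x : F) : KK F I := algebraMap F (KK F I) x

/-- The structure function ζ_{ij}(x) of the (doubled) quiver with edge set `E`,
source/target maps `src`,`tgt`, and parameters `q`, `tp e`. -/
def zeta (src tgt : E → I) (q : F) (tp : E → F) (i j : I) (x : KK F I) : KK F I :=
  (if i = j then (1 - x * (cst F I q)⁻¹) / (1 - x) else 1) *
  (∏ e : E, if src e = i ∧ tgt e = j then (cst F I (tp e))⁻¹ - x else 1) *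
  (∏ e : E, if src e = j ∧ tgt e = i then 1 - cst F I (tp e) * (cst F I q * x)⁻¹ else 1)

/-- The subalgebra of Laurent polynomials in the variables `z_{i,a}`, `a < n i`. -/
def LaurentIn (n : I → ℕ) : Subalgebra F (KK F I) :=
  Algebra.adjoin F {x | ∃ i a, a < n i ∧ (x = zVar F I (i, a) ∨ x = (zVar F I (i, a))⁻¹)}

/-- The field automorphism of `KK` induced by a permutation of the variables. -/
def permHom (e : (I × ℕ) ≃ (I × ℕ)) : KK F I →+* KK F I :=
  IsFractionRing.lift
    (g := (algebraMap (MvPolynomial (I × ℕ) F) (KK F I)).comp (rename (R := F) e).toRingHom)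
    (by
      have h := (IsFractionRing.injective (MvPolynomial (I × ℕ) F) (KK F I)).comp
        (MvPolynomial.rename_injective (R := F) e e.injective)
      intro x y hxy
      exact h hxy)

/-- `f` is symmetric in the variables `z_{i,1},…,z_{i,n i}` for every colour `i` separately. -/
def SymIn (n : I → ℕ) (f : KK F I) : Prop :=
  ∀ e : (I × ℕ) ≃ (I × ℕ), (∀ p : I × ℕ, (e p).1 = p.1) →
    (∀ p : I × ℕ, n p.1 ≤ p.2 → e p = p) → permHom F I e f = f

/-- The injective endomorphism of `KK` sending `z_{i,a} ↦ z_{i, a + n i}`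
(shifting the variables of the second factor in the shuffle product). -/
def shiftHom (n : I → ℕ) : KK F I →+* KK F I :=
  IsFractionRing.lift
    (g := (algebraMap (MvPolynomial (I × ℕ) F) (KK F I)).comp
      (rename (R := F) (fun p : I × ℕ => (p.1, p.2 + n p.1))).toRingHom)
    (by
      have hinj : Function.Injective (fun p : I × ℕ => (p.1, p.2 + n p.1)) := by
        rintro ⟨i, a⟩ ⟨j, b⟩ h
        simp only [Prod.mk.injEq] at h
        obtain ⟨h1, h2⟩ := h
        subst h1
        simp only [Prod.mk.injEq, true_and]
        omega
      have h := (IsFractionRing.injective (MvPolynomial (I × ℕ) F) (KK F I)).comp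
        (MvPolynomial.rename_injective (R := F) _ hinj)
      intro x y hxy
      exact h hxy)

/-- The permutation of the variables `z_{i,a}`, `a < n i`, associated to a family of
permutations `σ i ∈ S_{n i}` (fixing all other variables). -/
def permOf (n : I → ℕ) (σ : ∀ i, Equiv.Perm (Fin (n i))) : (I × ℕ) ≃ (I × ℕ) where
  toFun p := (p.1, if h : p.2 < n p.1 then ((σ p.1) ⟨p.2, h⟩ : Fin (n p.1)).1 else p.2)
  invFun p := (p.1, if h : p.2 < n p.1 then ((σ p.1)⁻¹ ⟨p.2, h⟩ : Fin (n p.1)).1 else p.2)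
  left_inv := by
    rintro ⟨i, a⟩
    dsimp only
    by_cases h : a < n i
    · rw [dif_pos h]
      have h2 : (((σ i) ⟨a, h⟩ : Fin (n i)) : ℕ) < n i := ((σ i) ⟨a, h⟩).2
      rw [dif_pos h2]
      simp
    · rw [dif_neg h, dif_neg h]
  right_inv := by
    rintro ⟨i, a⟩
    dsimp only
    by_cases h : a < n i
    · rw [dif_pos h]
      have h2 : (((σ i)⁻¹ ⟨a, h⟩ : Fin (n i)) : ℕ) < n i := ((σ i)⁻¹ ⟨a, h⟩).2
      rw [dif_pos h2]
      simp
    · rw [dif_neg h, dif_neg h]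

/-- The kernel `∏_{i,j ∈ I} ∏_{a < n i} ∏_{b < n' j} ζ_{ij}(z_{i,a} / z_{j, n j + b})`. -/
def shufKernel (src tgt : E → I) (q : F) (tp : E → F) (n n' : I → ℕ) : KK F I :=
  ∏ i : I, ∏ j : I, ∏ a ∈ Finset.range (n i), ∏ b ∈ Finset.range (n' j),
    zeta F I E src tgt q tp i j (zVar F I (i, a) / zVar F I (j, n j + b))

/-- The shuffle product of `f` (in degree `n`) and `g` (in degree `n'`). -/
def shufMul (src tgt : E → I) (q : F) (tp : E → F) (n n' : I → ℕ) (f g : KK F I) : KK F I :=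
  ((∏ i : I, ((n i).factorial * (n' i).factorial) : ℕ) : KK F I)⁻¹ *
  ∑ σ : ∀ i, Equiv.Perm (Fin (n i + n' i)),
    permHom F I (permOf I (fun i => n i + n' i) σ)
      (f * shiftHom F I n g * shufKernel F I E src tgt q tp n n')

/-- Substitution of the first wheel condition: for an edge `e : i → j`,
set `z_{i,a} := q z_{i,c}` and `z_{j,b} := t_e z_{i,c}` (so that
`z_{i,a} = q z_{j,b} / t_e = q z_{i,c}`). -/
def wheelSubst₁ (src tgt : E → I) (q : F) (tp : E → F) (e : E) (a b c : ℕ) :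
    I × ℕ → KK F I := fun p =>
  if p = (src e, a) then cst F I q * zVar F I (src e, c)
  else if p = (tgt e, b) then cst F I (tp e) * zVar F I (src e, c)
  else zVar F I p

/-- Substitution of the second wheel condition: for an edge `e : i → j`,
set `z_{j,a} := q z_{j,c}` and `z_{i,b} := q z_{j,c} / t_e` (so that
`z_{j,a} = t_e z_{i,b} = q z_{j,c}`). -/
def wheelSubst₂ (src tgt : E → I) (q : F) (tp : E → F) (e : E) (a b c : ℕ) :
    I × ℕ → KK F I := fun p =>
  if p = (tgt e, a) then cst F I q * zVar F I (tgt e, c)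
  else if p = (src e, b) then cst F I q * (cst F I (tp e))⁻¹ * zVar F I (tgt e, c)
  else zVar F I p

/-- `f` (a Laurent polynomial in the variables `z_{i,a}`, `a < n i`) satisfies the
wheel conditions: writing `f = P / z^D`, the substitutions `wheelSubst₁`/`wheelSubst₂`
annihilate the numerator `P`. -/
def Wheel (src tgt : E → I) (q : F) (tp : E → F) (n : I → ℕ) (f : KK F I) : Prop :=
  ∀ e : E, ∀ a b c : ℕ,
    ∀ P : MvPolynomial (I × ℕ) F, ∀ D : (I × ℕ) →₀ ℕ,
      f * algebraMap (MvPolynomial (I × ℕ) F) (KK F I) (monomial D 1)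
        = algebraMap (MvPolynomial (I × ℕ) F) (KK F I) P →
      (a < n (src e) → c < n (src e) → b < n (tgt e) → a ≠ c →
        (src e = tgt e → a ≠ b ∧ b ≠ c) →
        aeval (wheelSubst₁ F I E src tgt q tp e a b c) P = 0) ∧
      (a < n (tgt e) → c < n (tgt e) → b < n (src e) → a ≠ c →
        (src e = tgt e → a ≠ b ∧ b ≠ c) →
        aeval (wheelSubst₂ F I E src tgt q tp e a b c) P = 0)

/-- `f` is a homogeneous rational function of total degree `d` in the variables. -/
def IsHomogRat (d : ℤ) (f : KK F I) : Prop :=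
  ∃ (P Q : MvPolynomial (I × ℕ) F) (dP dQ : ℕ),
    P.IsHomogeneous dP ∧ Q.IsHomogeneous dQ ∧ Q ≠ 0 ∧
    f = algebraMap (MvPolynomial (I × ℕ) F) (KK F I) P /
        algebraMap (MvPolynomial (I × ℕ) F) (KK F I) Q ∧
    (dP : ℤ) - (dQ : ℤ) = d

/-- The shift map `τ_k` in horizontal degree `n`:
multiplication by `∏_{i ∈ I, a < n i} z_{i,a}^{k i}`. -/
def tauShift (k : I → ℤ) (n : I → ℕ) (f : KK F I) : KK F I :=
  f * ∏ i : I, ∏ a ∈ Finset.range (n i), (zVar F I (i, a)) ^ (k i)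

/-- Auxiliary map: scaling the variables `z_{i,a}`, `a < k i`, by the formal
parameter `ξ = X` of `RatFunc`. -/
def phi1 (k : I → ℕ) : MvPolynomial (I × ℕ) F →+* Polynomial (MvPolynomial (I × ℕ) F) :=
  (MvPolynomial.aeval (R := F) (fun p : I × ℕ =>
    Polynomial.C (X p) * (if p.2 < k p.1 then Polynomial.X else 1))).toRingHom

lemma phi1_inj (k : I → ℕ) : Function.Injective (phi1 F I k) := by
  have h : (Polynomial.evalRingHom (1 : MvPolynomial (I × ℕ) F)).comp (phi1 F I k)
      = RingHom.id _ := by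
    apply MvPolynomial.ringHom_ext
    · intro a; simp [phi1]
    · intro p; by_cases h : p.2 < k p.1 <;> simp [phi1, h]
  intro x y hxy
  have hx := congrArg (Polynomial.evalRingHom (1 : MvPolynomial (I × ℕ) F)) hxy
  rw [← RingHom.comp_apply, ← RingHom.comp_apply, h, RingHom.id_apply, RingHom.id_apply] at hx
  exact hx

/-- The field embedding `KK → RatFunc KK` sending `z_{i,a} ↦ ξ · z_{i,a}` for `a < k i`
and fixing all other variables, where `ξ` is the variable of `RatFunc`. -/
def xiScale (k : I → ℕ) : KK F I →+* RatFunc (KK F I) :=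
  IsFractionRing.lift
    (g := ((algebraMap (Polynomial (KK F I)) (RatFunc (KK F I))).comp
      ((Polynomial.mapRingHom (algebraMap (MvPolynomial (I × ℕ) F) (KK F I))).comp
        (phi1 F I k))))
    (by
      have h1 := RatFunc.algebraMap_injective (KK F I)
      have h2 := Polynomial.map_injective (algebraMap (MvPolynomial (I × ℕ) F) (KK F I))
        (IsFractionRing.injective (MvPolynomial (I × ℕ) F) (KK F I))
      have h3 := phi1_inj F I k
      intro x y hxy
      apply h3; apply h2; apply h1
      exact hxy)

/-- The limit of `g / ξ^r` as `ξ → ∞` is finite. -/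
def LimFiniteAtInfty (g : RatFunc (KK F I)) (r : ℚ) : Prop :=
  g = 0 ∨ ((g.intDegree : ℚ) ≤ r)

/-- The number of edges `i → j` of the quiver. -/
def edgeCount (src tgt : E → I) (i j : I) : ℕ :=
  (Finset.univ.filter (fun e => src e = i ∧ tgt e = j)).card

/-- The bilinear form `⟨k, l⟩ = Σ_{i,j} k_i l_j #(i → j)`. -/
def formE (src tgt : E → I) (k l : I → ℕ) : ℚ :=
  ∑ i : I, ∑ j : I, (k i : ℚ) * (l j : ℚ) * (edgeCount I E src tgt i j : ℚ)

/-- The dot product `m · k`. -/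
def dotQ (m : I → ℚ) (k : I → ℕ) : ℚ := ∑ i : I, m i * (k i : ℚ)

/-- `f` (of horizontal degree `n`) has slope `≤ m`: for all `0 ≤ k ≤ n`, the limit
`lim_{ξ→∞} f(ξ z_{i,1},…,ξ z_{i,k_i}, z_{i,k_i+1},…) / ξ^{m·k + ⟨k, n−k⟩}` is finite. -/
def SlopeLE (src tgt : E → I) (m : I → ℚ) (n : I → ℕ) (f : KK F I) : Prop :=
  ∀ k : I → ℕ, (∀ i, k i ≤ n i) →
    LimFiniteAtInfty F I (xiScale F I k f)
      (dotQ I m k + formE I E src tgt k (fun i => n i - k i))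


section ShuffleAux

/-! ### Basic homomorphism lemmas -/

lemma permHom_iota (e : (I × ℕ) ≃ (I × ℕ)) (P : MvPolynomial (I × ℕ) F) :
    permHom F I e (algebraMap (MvPolynomial (I × ℕ) F) (KK F I) P)
      = algebraMap (MvPolynomial (I × ℕ) F) (KK F I) (rename e P) :=
  IsFractionRing.lift_algebraMap _ _

lemma permHom_comp_apply (e e' : (I × ℕ) ≃ (I × ℕ)) (x : KK F I) :
    permHom F I e (permHom F I e' x) = permHom F I (e'.trans e) x := by
  have h : (permHom F I e).comp (permHom F I e') = permHom F I (e'.trans e) := by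
    apply IsLocalization.ringHom_ext (nonZeroDivisors (MvPolynomial (I × ℕ) F))
    ext P <;>
      simp only [RingHom.comp_apply, permHom_iota, rename_rename, Equiv.coe_trans]
  exact congrFun (congrArg (fun f => f.toFun) h) x

lemma permHom_cst (e : (I × ℕ) ≃ (I × ℕ)) (x : F) :
    permHom F I e (algebraMap F (KK F I) x) = algebraMap F (KK F I) x := by
  rw [IsScalarTower.algebraMap_apply F (MvPolynomial (I × ℕ) F) (KK F I), permHom_iota]
  simp [algebraMap_eq]

/-- `permHom` as an `F`-algebra homomorphism. -/
def permAlg (e : (I × ℕ) ≃ (I × ℕ)) : KK F I →ₐ[F] KK F I :=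
  { permHom F I e with commutes' := permHom_cst F I e }

lemma permAlg_apply (e : (I × ℕ) ≃ (I × ℕ)) (x : KK F I) :
    permAlg F I e x = permHom F I e x := rfl

lemma permHom_zVar (e : (I × ℕ) ≃ (I × ℕ)) (v : I × ℕ) :
    permHom F I e (zVar F I v) = zVar F I (e v) := by
  rw [zVar, permHom_iota, rename_X]; rfl

lemma shiftHom_iota (n : I → ℕ) (P : MvPolynomial (I × ℕ) F) :
    shiftHom F I n (algebraMap (MvPolynomial (I × ℕ) F) (KK F I) P)
      = algebraMap (MvPolynomial (I × ℕ) F) (KK F I)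
          (rename (fun p : I × ℕ => (p.1, p.2 + n p.1)) P) :=
  IsFractionRing.lift_algebraMap _ _

lemma shiftHom_cst (n : I → ℕ) (x : F) :
    shiftHom F I n (algebraMap F (KK F I) x) = algebraMap F (KK F I) x := by
  rw [IsScalarTower.algebraMap_apply F (MvPolynomial (I × ℕ) F) (KK F I), shiftHom_iota]
  simp [algebraMap_eq]

/-- `shiftHom` as an `F`-algebra homomorphism. -/
def shiftAlg (n : I → ℕ) : KK F I →ₐ[F] KK F I :=
  { shiftHom F I n with commutes' := shiftHom_cst F I n }

lemma shiftHom_zVar (n : I → ℕ) (v : I × ℕ) :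
    shiftHom F I n (zVar F I v) = zVar F I (v.1, v.2 + n v.1) := by
  rw [zVar, shiftHom_iota, rename_X]; rfl

/-! ### Laurent membership helpers -/

lemma zVar_mem (N : I → ℕ) {i : I} {a : ℕ} (h : a < N i) :
    zVar F I (i, a) ∈ LaurentIn F I N :=
  Algebra.subset_adjoin ⟨i, a, h, Or.inl rfl⟩

lemma zVar_inv_mem (N : I → ℕ) {i : I} {a : ℕ} (h : a < N i) :
    (zVar F I (i, a))⁻¹ ∈ LaurentIn F I N :=
  Algebra.subset_adjoin ⟨i, a, h, Or.inr rfl⟩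

lemma LaurentIn_mono {n N : I → ℕ} (h : ∀ i, n i ≤ N i) :
    LaurentIn F I n ≤ LaurentIn F I N := by
  apply Algebra.adjoin_mono
  rintro x ⟨i, a, ha, hx⟩
  exact ⟨i, a, lt_of_lt_of_le ha (h i), hx⟩

lemma algHom_mem_Laurent {n N : I → ℕ} (ψ : KK F I →ₐ[F] KK F I)
    (hψ : ∀ i a, a < n i → ψ (zVar F I (i, a)) ∈ LaurentIn F I N ∧
      ψ ((zVar F I (i, a))⁻¹) ∈ LaurentIn F I N)
    {x : KK F I} (hx : x ∈ LaurentIn F I n) : ψ x ∈ LaurentIn F I N := by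
  have : LaurentIn F I n ≤ (LaurentIn F I N).comap ψ := by
    apply Algebra.adjoin_le
    rintro y ⟨i, a, ha, hy | hy⟩ <;> subst hy
    · exact (hψ i a ha).1
    · exact (hψ i a ha).2
  exact this hx

lemma iota_supported_mem (N : I → ℕ) {P : MvPolynomial (I × ℕ) F}
    (hP : P ∈ supported F {v : I × ℕ | v.2 < N v.1}) :
    algebraMap (MvPolynomial (I × ℕ) F) (KK F I) P ∈ LaurentIn F I N := by
  have : supported F {v : I × ℕ | v.2 < N v.1} ≤
      (LaurentIn F I N).comap (IsScalarTower.toAlgHom F (MvPolynomial (I × ℕ) F) (KK F I)) := by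
    apply Algebra.adjoin_le
    rintro y ⟨v, hv, rfl⟩
    exact zVar_mem F I N hv
  exact this hP

end ShuffleAux
section ShuffleAuxC

/-! ### Vandermonde-type products -/

/-- Ordered pairs `a < b < N i`. -/
def pairsC (N : I → ℕ) (i : I) : Finset (ℕ × ℕ) :=
  (Finset.range (N i) ×ˢ Finset.range (N i)).filter (fun p => p.1 < p.2)

/-- The linear form `z_{i,b} - z_{i,a}`. -/
def lin (i : I) (p : ℕ × ℕ) : MvPolynomial (I × ℕ) F :=
  X (i, p.2) - X (i, p.1)

/-- The Vandermonde-type product over all colours. -/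
def Vand (N : I → ℕ) : MvPolynomial (I × ℕ) F :=
  ∏ i : I, ∏ p ∈ pairsC I N i, lin F I i p

/-- The index pairs of the denominator of the shuffle kernel. -/
def Dset (n n' : I → ℕ) (i : I) : Finset (ℕ × ℕ) :=
  (Finset.range (n i) ×ˢ Finset.range (n' i)).image (fun p => (p.1, n i + p.2))

def Dpoly (n n' : I → ℕ) : MvPolynomial (I × ℕ) F :=
  ∏ i : I, ∏ p ∈ Dset I n n' i, lin F I i p

def Wpoly (n n' : I → ℕ) : MvPolynomial (I × ℕ) F :=
  ∏ i : I, ∏ p ∈ pairsC I (fun i => n i + n' i) i \ Dset I n n' i, lin F I i p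

lemma Dset_subset (n n' : I → ℕ) (i : I) :
    Dset I n n' i ⊆ pairsC I (fun i => n i + n' i) i := by
  intro p hp
  simp only [Dset, Finset.mem_image, Finset.mem_product, Finset.mem_range] at hp
  obtain ⟨q, ⟨hq1, hq2⟩, rfl⟩ := hp
  simp only [pairsC, Finset.mem_filter, Finset.mem_product, Finset.mem_range]
  omega

lemma Vand_eq (n n' : I → ℕ) :
    Vand F I (fun i => n i + n' i) = Wpoly F I n n' * Dpoly F I n n' := by
  rw [Vand, Wpoly, Dpoly, ← Finset.prod_mul_distrib]
  refine Finset.prod_congr rfl fun i _ => ?_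
  exact (Finset.prod_sdiff (Dset_subset I n n' i)).symm

lemma Dpoly_eq (n n' : I → ℕ) :
    Dpoly F I n n' = ∏ i : I, ∏ a ∈ Finset.range (n i), ∏ b ∈ Finset.range (n' i),
      (X (i, n i + b) - X (i, a)) := by
  rw [Dpoly]
  refine Finset.prod_congr rfl fun i _ => ?_
  rw [Dset, Finset.prod_image, Finset.prod_product]
  · rfl
  · rintro ⟨a, b⟩ - ⟨a', b'⟩ - h
    simp only [Prod.mk.injEq] at h ⊢
    omega

lemma lin_mem_supported (N : I → ℕ) (i : I) {p : ℕ × ℕ} (hp : p ∈ pairsC I N i) :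
    lin F I i p ∈ supported F {v : I × ℕ | v.2 < N v.1} := by
  simp only [pairsC, Finset.mem_filter, Finset.mem_product, Finset.mem_range] at hp
  exact sub_mem (X_mem_supported.2 hp.1.2) (X_mem_supported.2 hp.1.1)

lemma Vand_mem_supported (N : I → ℕ) :
    Vand F I N ∈ supported F {v : I × ℕ | v.2 < N v.1} :=
  Subalgebra.prod_mem _ fun i _ => Subalgebra.prod_mem _ fun p hp =>
    lin_mem_supported F I N i hp

lemma Wpoly_mem_supported (n n' : I → ℕ) :
    Wpoly F I n n' ∈ supported F {v : I × ℕ | v.2 < n v.1 + n' v.1} :=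
  Subalgebra.prod_mem _ fun i _ => Subalgebra.prod_mem _ fun p hp =>
    lin_mem_supported F I (fun i => n i + n' i) i (Finset.mem_sdiff.1 hp).1

lemma lin_ne_zero (i : I) {p : ℕ × ℕ} (hp : p.1 ≠ p.2) : lin F I i p ≠ 0 := by
  rw [lin, sub_ne_zero]
  intro h
  have h2 := X_injective h
  simp only [Prod.ext_iff] at h2
  exact hp h2.2.symm

lemma Vand_ne_zero (N : I → ℕ) : Vand F I N ≠ 0 := by
  rw [Vand]
  apply Finset.prod_ne_zero_iff.2
  intro i _
  apply Finset.prod_ne_zero_iff.2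
  intro p hp
  simp only [pairsC, Finset.mem_filter] at hp
  exact lin_ne_zero F I i (Nat.ne_of_lt hp.2)

end ShuffleAuxC
section ShuffleAuxD

lemma zVar_ne_zero (v : I × ℕ) : zVar F I v ≠ 0 := by
  intro h
  have hX : (X v : MvPolynomial (I × ℕ) F) ≠ 0 := X_ne_zero v
  exact hX (IsFractionRing.injective (MvPolynomial (I × ℕ) F) (KK F I)
    (by rw [← zVar, h, map_zero]))

lemma zVar_injective : Function.Injective (zVar F I) := by
  intro v w h
  exact X_injective (IsFractionRing.injective (MvPolynomial (I × ℕ) F) (KK F I) h)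

lemma cst_inv_mem (N : I → ℕ) (x : F) : (cst F I x)⁻¹ ∈ LaurentIn F I N := by
  rw [cst, ← map_inv₀]; exact Subalgebra.algebraMap_mem _ _

lemma zeta_factor_mem (src tgt : E → I) (q : F) (tp : E → F) (n n' : I → ℕ)
    (i j : I) {a b : ℕ} (ha : a < n i) (hb : b < n' j) :
    zeta F I E src tgt q tp i j (zVar F I (i, a) / zVar F I (j, n j + b)) *
      (if i = j then algebraMap (MvPolynomial (I × ℕ) F) (KK F I)
        (X (j, n j + b) - X (i, a)) else 1)
      ∈ LaurentIn F I (fun k => n k + n' k) := by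
  set N : I → ℕ := fun k => n k + n' k with hN
  have hxa : zVar F I (i, a) ∈ LaurentIn F I N := zVar_mem F I N (by simp [hN]; omega)
  have hxa' : (zVar F I (i, a))⁻¹ ∈ LaurentIn F I N := zVar_inv_mem F I N (by simp [hN]; omega)
  have hxb : zVar F I (j, n j + b) ∈ LaurentIn F I N := zVar_mem F I N (by simp [hN]; omega)
  have hxb' : (zVar F I (j, n j + b))⁻¹ ∈ LaurentIn F I N :=
    zVar_inv_mem F I N (by simp [hN]; omega)
  have hx : zVar F I (i, a) / zVar F I (j, n j + b) ∈ LaurentIn F I N := by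
    rw [div_eq_mul_inv]; exact mul_mem hxa hxb'
  have hxinv : (zVar F I (i, a) / zVar F I (j, n j + b))⁻¹ ∈ LaurentIn F I N := by
    rw [inv_div, div_eq_mul_inv]; exact mul_mem hxb hxa'
  have hcst : ∀ y : F, cst F I y ∈ LaurentIn F I N := fun y => Subalgebra.algebraMap_mem _ y
  have hB : (∏ e : E, if src e = i ∧ tgt e = j then
      (cst F I (tp e))⁻¹ - zVar F I (i, a) / zVar F I (j, n j + b) else 1)
      ∈ LaurentIn F I N := by
    refine Subalgebra.prod_mem _ fun e _ => ?_
    split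
    · exact sub_mem (cst_inv_mem F I N _) hx
    · exact one_mem _
  have hC : (∏ e : E, if src e = j ∧ tgt e = i then
      1 - cst F I (tp e) * (cst F I q * (zVar F I (i, a) / zVar F I (j, n j + b)))⁻¹ else 1)
      ∈ LaurentIn F I N := by
    refine Subalgebra.prod_mem _ fun e _ => ?_
    split
    · rw [mul_inv_rev]
      exact sub_mem (one_mem _) (mul_mem (hcst _) (mul_mem hxinv (cst_inv_mem F I N _)))
    · exact one_mem _
  by_cases hij : i = j
  · subst hij
    rw [zeta, if_pos rfl, if_pos rfl]
    set x := zVar F I (i, a) / zVar F I (i, n i + b) with hxdef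
    have hzb : zVar F I (i, n i + b) ≠ 0 := zVar_ne_zero F I _
    have hza : zVar F I (i, a) ≠ 0 := zVar_ne_zero F I _
    have hne : zVar F I (i, a) ≠ zVar F I (i, n i + b) := by
      intro h
      have h2 := zVar_injective F I h
      simp only [Prod.mk.injEq] at h2
      omega
    have h1x : (1 : KK F I) - x ≠ 0 := by
      rw [sub_ne_zero, hxdef]
      intro h
      exact hne ((div_eq_one_iff_eq hzb).1 h.symm)
    have hlin : algebraMap (MvPolynomial (I × ℕ) F) (KK F I) (X (i, n i + b) - X (i, a))
        = zVar F I (i, n i + b) - zVar F I (i, a) := by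
      rw [map_sub]; rfl
    have hzz : zVar F I (i, n i + b) - zVar F I (i, a) = (1 - x) * zVar F I (i, n i + b) := by
      rw [hxdef]
      field_simp
    have key : ∀ BB CC : KK F I,
        (1 - x * (cst F I q)⁻¹) / (1 - x) * BB * CC *
          (zVar F I (i, n i + b) - zVar F I (i, a))
        = ((1 - x * (cst F I q)⁻¹) * zVar F I (i, n i + b)) * BB * CC := by
      intro BB CC
      rw [hzz, div_mul_eq_mul_div, div_mul_eq_mul_div, div_mul_eq_mul_div, div_eq_iff h1x]
      ring
    rw [hlin, key]
    exact mul_mem (mul_mem (mul_mem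
      (sub_mem (one_mem _) (mul_mem hx (cst_inv_mem F I N q))) hxb) hB) hC
  · rw [zeta, if_neg hij, if_neg hij, one_mul, mul_one]
    exact mul_mem hB hC

lemma kernel_mul_Dpoly_mem (src tgt : E → I) (q : F) (tp : E → F) (n n' : I → ℕ) :
    shufKernel F I E src tgt q tp n n' *
      algebraMap (MvPolynomial (I × ℕ) F) (KK F I) (Dpoly F I n n')
      ∈ LaurentIn F I (fun k => n k + n' k) := by
  have hD : algebraMap (MvPolynomial (I × ℕ) F) (KK F I) (Dpoly F I n n')
      = ∏ i : I, ∏ j : I, ∏ a ∈ Finset.range (n i), ∏ b ∈ Finset.range (n' j),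
          (if i = j then algebraMap (MvPolynomial (I × ℕ) F) (KK F I)
            (X (j, n j + b) - X (i, a)) else 1) := by
    rw [Dpoly_eq, map_prod]
    refine Finset.prod_congr rfl fun i _ => ?_
    have step : ∀ j : I, (∏ a ∈ Finset.range (n i), ∏ b ∈ Finset.range (n' j),
        (if i = j then algebraMap (MvPolynomial (I × ℕ) F) (KK F I)
          (X (j, n j + b) - X (i, a)) else 1))
        = (if i = j then ∏ a ∈ Finset.range (n i), ∏ b ∈ Finset.range (n' j),
            algebraMap (MvPolynomial (I × ℕ) F) (KK F I) (X (j, n j + b) - X (i, a)) else 1) := by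
      intro j
      by_cases h : i = j
      · simp [h]
      · simp [h]
    rw [Finset.prod_congr rfl (fun j _ => step j), Finset.prod_ite_eq, if_pos (Finset.mem_univ i)]
    rw [map_prod]
    refine Finset.prod_congr rfl fun a _ => ?_
    rw [map_prod]
  rw [hD, shufKernel, ← Finset.prod_mul_distrib]
  refine Subalgebra.prod_mem _ fun i _ => ?_
  rw [← Finset.prod_mul_distrib]
  refine Subalgebra.prod_mem _ fun j _ => ?_
  rw [← Finset.prod_mul_distrib]
  refine Subalgebra.prod_mem _ fun a haa => ?_
  rw [← Finset.prod_mul_distrib]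
  refine Subalgebra.prod_mem _ fun b hbb => ?_
  exact zeta_factor_mem F I E src tgt q tp n n' i j
    (Finset.mem_range.1 haa) (Finset.mem_range.1 hbb)

end ShuffleAuxD
section ShuffleAuxE

/-- The action of a colour-preserving permutation on the index of colour `i`. -/
def colMap (e : (I × ℕ) ≃ (I × ℕ)) (i : I) : ℕ → ℕ := fun c => (e (i, c)).2

lemma colMap_spec (e : (I × ℕ) ≃ (I × ℕ)) (hc : ∀ p : I × ℕ, (e p).1 = p.1)
    (i : I) (c : ℕ) : e (i, c) = (i, colMap I e i c) := by
  have := hc (i, c)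
  ext
  · exact this
  · rfl

lemma colMap_inj (e : (I × ℕ) ≃ (I × ℕ)) (hc : ∀ p : I × ℕ, (e p).1 = p.1) (i : I) :
    Function.Injective (colMap I e i) := by
  intro c d h
  have h2 : e (i, c) = e (i, d) := by
    rw [colMap_spec I e hc, colMap_spec I e hc, h]
  simpa using e.injective h2

lemma colMap_lt (N : I → ℕ) (e : (I × ℕ) ≃ (I × ℕ)) (hc : ∀ p : I × ℕ, (e p).1 = p.1)
    (hf : ∀ p : I × ℕ, N p.1 ≤ p.2 → e p = p) (i : I) {c : ℕ} (hcN : c < N i) :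
    colMap I e i c < N i := by
  by_contra hge
  push_neg at hge
  have h1 : e (i, colMap I e i c) = (i, colMap I e i c) := hf _ hge
  have h2 : e (i, c) = (i, colMap I e i c) := colMap_spec I e hc i c
  have := e.injective (h2.trans h1.symm)
  simp only [Prod.mk.injEq] at this
  omega

lemma colMap_symm (e : (I × ℕ) ≃ (I × ℕ)) (hc : ∀ p : I × ℕ, (e p).1 = p.1) (i : I) (c : ℕ) :
    colMap I e.symm i (colMap I e i c) = c ∧ colMap I e i (colMap I e.symm i c) = c := by
  have hcs : ∀ p : I × ℕ, (e.symm p).1 = p.1 := by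
    intro p
    conv_rhs => rw [← e.apply_symm_apply p]
    exact (hc (e.symm p)).symm
  constructor
  · have : e.symm (i, colMap I e i c) = (i, c) := by
      rw [← colMap_spec I e hc i c, e.symm_apply_apply]
    rw [colMap, this]
  · have : e (i, colMap I e.symm i c) = (i, c) := by
      rw [← colMap_spec I e.symm hcs i c, e.apply_symm_apply]
    rw [colMap, this]

/-- Per-colour sign lemma for renaming the Vandermonde factor. -/
lemma rename_vand_color (N : I → ℕ) (e : (I × ℕ) ≃ (I × ℕ))
    (hc : ∀ p : I × ℕ, (e p).1 = p.1) (hf : ∀ p : I × ℕ, N p.1 ≤ p.2 → e p = p) (i : I) :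
    rename e (∏ p ∈ pairsC I N i, lin F I i p)
      = (-1 : MvPolynomial (I × ℕ) F) ^
          (((pairsC I N i).filter (fun p => colMap I e i p.2 < colMap I e i p.1)).card) *
        ∏ p ∈ pairsC I N i, lin F I i p := by
  set u := colMap I e i with hu
  have hcs : ∀ p : I × ℕ, (e.symm p).1 = p.1 := by
    intro p
    conv_rhs => rw [← e.apply_symm_apply p]
    exact (hc (e.symm p)).symm
  have hfs : ∀ p : I × ℕ, N p.1 ≤ p.2 → e.symm p = p := by
    intro p hp
    conv_lhs => rw [← hf p hp]
    exact e.symm_apply_apply p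
  set u' := colMap I e.symm i with hu'
  have huu' : ∀ c, u' (u c) = c := fun c => (colMap_symm I e hc i c).1
  have hu'u : ∀ c, u (u' c) = c := fun c => (colMap_symm I e hc i c).2
  have hulty : ∀ {c}, c < N i → u c < N i := fun hc' => colMap_lt I N e hc hf i hc'
  have hu'lt : ∀ {c}, c < N i → u' c < N i := fun hc' => colMap_lt I N e.symm hcs hfs i hc'
  have hmem : ∀ {x y : ℕ}, x < N i → y < N i → x < y →
      ((x, y) : ℕ × ℕ) ∈ pairsC I N i := by
    intro x y hx hy hxy
    simp only [pairsC, Finset.mem_filter, Finset.mem_product, Finset.mem_range]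
    exact ⟨⟨hx, hy⟩, hxy⟩
  have hmem' : ∀ {p : ℕ × ℕ}, p ∈ pairsC I N i → p.1 < N i ∧ p.2 < N i ∧ p.1 < p.2 := by
    intro p hp
    simp only [pairsC, Finset.mem_filter, Finset.mem_product, Finset.mem_range] at hp
    exact ⟨hp.1.1, hp.1.2, hp.2⟩
  -- rewrite each factor
  have hfac : ∀ p ∈ pairsC I N i, rename e (lin F I i p)
      = (if u p.2 < u p.1 then (-1 : MvPolynomial (I × ℕ) F) else 1) *
        lin F I i (if u p.2 < u p.1 then (u p.2, u p.1) else (u p.1, u p.2)) := by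
    intro p hp
    rw [lin, map_sub, rename_X, rename_X, colMap_spec I e hc, colMap_spec I e hc]
    by_cases h : u p.2 < u p.1
    · rw [if_pos h, if_pos h, lin]
      ring
    · rw [if_neg h, if_neg h, lin]
      ring
  rw [map_prod, Finset.prod_congr rfl hfac, Finset.prod_mul_distrib]
  congr 1
  · rw [Finset.prod_ite, Finset.prod_const, Finset.prod_const_one, mul_one]
  · -- reindexing
    refine Finset.prod_bij' (fun p _ => if u p.2 < u p.1 then (u p.2, u p.1) else (u p.1, u p.2))
      (fun p _ => if u' p.2 < u' p.1 then (u' p.2, u' p.1) else (u' p.1, u' p.2))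
      ?_ ?_ ?_ ?_ ?_
    · intro p hp
      obtain ⟨h1, h2, h3⟩ := hmem' hp
      by_cases h : u p.2 < u p.1
      · rw [if_pos h]
        exact hmem (hulty h2) (hulty h1) h
      · rw [if_neg h]
        have : u p.1 ≠ u p.2 := fun hh => (Nat.ne_of_lt h3) (colMap_inj I e hc i hh)
        exact hmem (hulty h1) (hulty h2) (by omega)
    · intro p hp
      obtain ⟨h1, h2, h3⟩ := hmem' hp
      by_cases h : u' p.2 < u' p.1
      · rw [if_pos h]
        exact hmem (hu'lt h2) (hu'lt h1) h
      · rw [if_neg h]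
        have hinj' : Function.Injective u' := colMap_inj I e.symm hcs i
        have : u' p.1 ≠ u' p.2 := fun hh => (Nat.ne_of_lt h3) (hinj' hh)
        exact hmem (hu'lt h1) (hu'lt h2) (by omega)
    · intro p hp
      obtain ⟨h1, h2, h3⟩ := hmem' hp
      by_cases h : u p.2 < u p.1
      · rw [if_pos h]
        simp only [huu']
        rw [if_pos h3]
      · rw [if_neg h]
        simp only [huu']
        rw [if_neg (by omega)]
    · intro p hp
      obtain ⟨h1, h2, h3⟩ := hmem' hp
      by_cases h : u' p.2 < u' p.1
      · rw [if_pos h]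
        simp only [hu'u]
        rw [if_pos h3]
      · rw [if_neg h]
        simp only [hu'u]
        rw [if_neg (by omega)]
    · intro p hp
      rfl

lemma rename_Vand (N : I → ℕ) (e : (I × ℕ) ≃ (I × ℕ))
    (hc : ∀ p : I × ℕ, (e p).1 = p.1) (hf : ∀ p : I × ℕ, N p.1 ≤ p.2 → e p = p) :
    rename e (Vand F I N)
      = (-1 : MvPolynomial (I × ℕ) F) ^
          (∑ i : I, ((pairsC I N i).filter
            (fun p => colMap I e i p.2 < colMap I e i p.1)).card) *
        Vand F I N := by
  rw [Vand, map_prod, Finset.prod_congr rfl (fun i _ => rename_vand_color F I N e hc hf i),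
    Finset.prod_mul_distrib, Finset.prod_pow_eq_pow_sum]

lemma rename_Vand_sign (N : I → ℕ) (e : (I × ℕ) ≃ (I × ℕ))
    (hc : ∀ p : I × ℕ, (e p).1 = p.1) (hf : ∀ p : I × ℕ, N p.1 ≤ p.2 → e p = p) :
    ∃ ε : MvPolynomial (I × ℕ) F, (ε = 1 ∨ ε = -1) ∧
      rename e (Vand F I N) = ε * Vand F I N :=
  ⟨_, neg_one_pow_eq_or _ _, rename_Vand F I N e hc hf⟩

end ShuffleAuxE
section ShuffleAuxF

lemma swap_color_preserving (i : I) (a b : ℕ) :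
    ∀ p : I × ℕ, ((Equiv.swap ((i, a) : I × ℕ) (i, b)) p).1 = p.1 := by
  intro p
  rcases eq_or_ne p (i, a) with h | h
  · subst h; rw [Equiv.swap_apply_left]
  rcases eq_or_ne p (i, b) with h2 | h2
  · subst h2; rw [Equiv.swap_apply_right]
  · rw [Equiv.swap_apply_of_ne_of_ne h h2]

lemma swap_fixes (N : I → ℕ) (i : I) (a b : ℕ) (ha : a < N i) (hb : b < N i) :
    ∀ p : I × ℕ, N p.1 ≤ p.2 → (Equiv.swap ((i, a) : I × ℕ) (i, b)) p = p := by
  intro p hp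
  apply Equiv.swap_apply_of_ne_of_ne
  · rintro rfl; simp only at hp; omega
  · rintro rfl; simp only at hp; omega

lemma colMap_swap (i : I) (a b : ℕ) (j : I) (c : ℕ) :
    colMap I (Equiv.swap ((i, a) : I × ℕ) (i, b)) j c
      = if j = i ∧ c = a then b else if j = i ∧ c = b then a else c := by
  rw [colMap]
  by_cases h1 : j = i ∧ c = a
  · obtain ⟨rfl, rfl⟩ := h1
    rw [if_pos ⟨rfl, rfl⟩, Equiv.swap_apply_left]
  by_cases h2 : j = i ∧ c = b
  · obtain ⟨rfl, rfl⟩ := h2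
    rw [if_neg h1, if_pos ⟨rfl, rfl⟩, Equiv.swap_apply_right]
  · rw [if_neg h1, if_neg h2, Equiv.swap_apply_of_ne_of_ne]
    · intro h
      rw [Prod.mk.injEq] at h
      exact h1 h
    · intro h
      rw [Prod.mk.injEq] at h
      exact h2 h

lemma swap_filter_card (N : I → ℕ) (i : I) (a b : ℕ) (hab : a < b) (hb : b < N i) :
    ((pairsC I N i).filter (fun p =>
      colMap I (Equiv.swap ((i, a) : I × ℕ) (i, b)) i p.2 <
        colMap I (Equiv.swap ((i, a) : I × ℕ) (i, b)) i p.1)).card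
    = 2 * (Finset.Ioo a b).card + 1 := by
  have hu : ∀ c, colMap I (Equiv.swap ((i, a) : I × ℕ) (i, b)) i c
      = if c = a then b else if c = b then a else c := by
    intro c
    rw [colMap_swap]
    simp
  have hset : (pairsC I N i).filter (fun p =>
      colMap I (Equiv.swap ((i, a) : I × ℕ) (i, b)) i p.2 <
        colMap I (Equiv.swap ((i, a) : I × ℕ) (i, b)) i p.1)
      = insert (a, b) (((Finset.Ioo a b).image (fun c => (a, c))) ∪
          ((Finset.Ioo a b).image (fun c => (c, b)))) := by
    ext ⟨x, y⟩
    simp only [Finset.mem_filter, pairsC, Finset.mem_product, Finset.mem_range, hu,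
      Finset.mem_insert, Finset.mem_union, Finset.mem_image, Finset.mem_Ioo, Prod.mk.injEq]
    constructor
    · rintro ⟨⟨⟨hx, hy⟩, hxy⟩, hlt⟩
      split_ifs at hlt <;>
        first
          | omega
          | (exact Or.inr (Or.inl ⟨y, by omega, by omega⟩))
          | (exact Or.inr (Or.inr ⟨x, by omega, by omega⟩))
    · intro h
      rcases h with ⟨rfl, rfl⟩ | ⟨c, hc, rfl, rfl⟩ | ⟨c, hc, rfl, rfl⟩ <;>
        (constructor
         · constructor
           · constructor <;> omega
           · omega) <;>
        (split_ifs <;> omega)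
  rw [hset, Finset.card_insert_of_notMem, Finset.card_union_of_disjoint,
    Finset.card_image_of_injective, Finset.card_image_of_injective]
  · omega
  · intro c d h; simpa using h
  · intro c d h; simpa using h
  · rw [Finset.disjoint_left]
    rintro ⟨x, y⟩ hx hy
    simp only [Finset.mem_image, Finset.mem_Ioo, Prod.mk.injEq] at hx hy
    obtain ⟨c, hc, rfl, rfl⟩ := hx
    obtain ⟨d, hd, hdx, hdy⟩ := hy
    omega
  · simp only [Finset.mem_union, Finset.mem_image, Finset.mem_Ioo, Prod.mk.injEq, not_or,
      not_exists]
    constructor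
    · intro c
      rintro ⟨hc, h1, h2⟩
      omega
    · intro c
      rintro ⟨hc, h1, h2⟩
      omega

lemma rename_swap_Vand (N : I → ℕ) (i : I) (a b : ℕ) (hab : a < b) (hb : b < N i) :
    rename (Equiv.swap ((i, a) : I × ℕ) (i, b)) (Vand F I N) = - Vand F I N := by
  rw [rename_Vand F I N _ (swap_color_preserving I i a b)
    (swap_fixes I N i a b (lt_trans hab hb) hb)]
  have hsum : (∑ j : I, ((pairsC I N j).filter (fun p =>
      colMap I (Equiv.swap ((i, a) : I × ℕ) (i, b)) j p.2 <
        colMap I (Equiv.swap ((i, a) : I × ℕ) (i, b)) j p.1)).card)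
      = 2 * (Finset.Ioo a b).card + 1 := by
    rw [Finset.sum_eq_single i]
    · exact swap_filter_card I N i a b hab hb
    · intro j _ hji
      rw [Finset.card_eq_zero, Finset.filter_eq_empty_iff]
      intro p hp
      have h1 : colMap I (Equiv.swap ((i, a) : I × ℕ) (i, b)) j p.2 = p.2 := by
        rw [colMap_swap]; simp [hji]
      have h2 : colMap I (Equiv.swap ((i, a) : I × ℕ) (i, b)) j p.1 = p.1 := by
        rw [colMap_swap]; simp [hji]
      rw [h1, h2]
      simp only [pairsC, Finset.mem_filter] at hp
      omega
    · intro h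
      exact absurd (Finset.mem_univ i) h
  rw [hsum, Odd.neg_one_pow ⟨(Finset.Ioo a b).card, by omega⟩, neg_one_mul]

end ShuffleAuxF
section ShuffleAuxG
set_option synthInstance.maxHeartbeats 1000000
set_option maxHeartbeats 1000000

lemma monomial_mem_supported {S : Set (I × ℕ)} {M : (I × ℕ) →₀ ℕ}
    (h : ∀ v ∈ M.support, v ∈ S) :
    (monomial M (1 : F)) ∈ supported F S := by
  rw [mem_supported, vars_monomial one_ne_zero]
  exact h

lemma laurent_elim (N : I → ℕ) {x : KK F I} (hx : x ∈ LaurentIn F I N) :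
    ∃ (P : MvPolynomial (I × ℕ) F) (M : (I × ℕ) →₀ ℕ),
      P ∈ supported F {v : I × ℕ | v.2 < N v.1} ∧
      (∀ v ∈ M.support, v.2 < N v.1) ∧
      x * algebraMap (MvPolynomial (I × ℕ) F) (KK F I) (monomial M 1)
        = algebraMap (MvPolynomial (I × ℕ) F) (KK F I) P := by
  induction hx using Algebra.adjoin_induction with
  | mem y hy =>
    obtain ⟨i, a, ha, rfl | rfl⟩ := hy
    · refine ⟨X (i, a), 0, X_mem_supported.2 ha, by simp, ?_⟩
      rw [monomial_zero', C_1, map_one, mul_one, zVar]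
    · refine ⟨1, Finsupp.single (i, a) 1, one_mem _, ?_, ?_⟩
      · intro v hv
        rw [Finsupp.support_single_ne_zero _ one_ne_zero] at hv
        simp only [Finset.mem_singleton] at hv
        subst hv
        exact ha
      · have : monomial (Finsupp.single ((i, a) : I × ℕ) 1) (1 : F) = X (i, a) := rfl
        rw [this, map_one, ← zVar]
        exact inv_mul_cancel₀ (zVar_ne_zero F I _)
  | algebraMap r =>
    refine ⟨C r, 0, Subalgebra.algebraMap_mem _ r, by simp, ?_⟩
    rw [monomial_zero', C_1, map_one, mul_one,
      IsScalarTower.algebraMap_apply F (MvPolynomial (I × ℕ) F) (KK F I), algebraMap_eq]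
  | add x y hxm hym ihx ihy =>
    obtain ⟨P1, M1, hP1, hM1, hx1⟩ := ihx
    obtain ⟨P2, M2, hP2, hM2, hx2⟩ := ihy
    refine ⟨P1 * monomial M2 1 + P2 * monomial M1 1, M1 + M2, ?_, ?_, ?_⟩
    · exact add_mem (mul_mem hP1 (monomial_mem_supported F I hM2))
        (mul_mem hP2 (monomial_mem_supported F I hM1))
    · intro v hv
      have := Finsupp.support_add hv
      rw [Finset.mem_union] at this
      rcases this with h | h
      exacts [hM1 v h, hM2 v h]
    · have hmm : (monomial (M1 + M2) (1 : F)) = monomial M1 1 * monomial M2 1 := by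
        rw [monomial_mul, mul_one]
      rw [hmm, map_mul, map_add, map_mul, map_mul, ← hx1, ← hx2]
      ring
  | mul x y hxm hym ihx ihy =>
    obtain ⟨P1, M1, hP1, hM1, hx1⟩ := ihx
    obtain ⟨P2, M2, hP2, hM2, hx2⟩ := ihy
    refine ⟨P1 * P2, M1 + M2, mul_mem hP1 hP2, ?_, ?_⟩
    · intro v hv
      have := Finsupp.support_add hv
      rw [Finset.mem_union] at this
      rcases this with h | h
      exacts [hM1 v h, hM2 v h]
    · have hmm : (monomial (M1 + M2) (1 : F)) = monomial M1 1 * monomial M2 1 := by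
        rw [monomial_mul, mul_one]
      rw [hmm, map_mul, map_mul, ← hx1, ← hx2]
      ring

/-! ### Divisibility by linear forms -/

lemma update_comp_swap (v w : I × ℕ) :
    (Function.update (X : I × ℕ → MvPolynomial (I × ℕ) F) v (X w)) ∘ (Equiv.swap v w)
      = Function.update X v (X w) := by
  funext u
  simp only [Function.comp_apply]
  by_cases huv : u = v
  · rw [huv, Equiv.swap_apply_left]
    rcases eq_or_ne w v with h | h
    · rw [h]
    · rw [Function.update_of_ne h, Function.update_self]
  · by_cases huw : u = w
    · have h2 : w ≠ v := by rw [← huw]; exact huv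
      rw [huw, Equiv.swap_apply_right, Function.update_self, Function.update_of_ne h2]
    · rw [Equiv.swap_apply_of_ne_of_ne huv huw]

lemma aeval_update_rename_swap (v w : I × ℕ) (P : MvPolynomial (I × ℕ) F) :
    aeval (Function.update (X : I × ℕ → MvPolynomial (I × ℕ) F) v (X w))
        (rename (Equiv.swap v w) P)
      = aeval (Function.update X v (X w)) P := by
  rw [aeval_rename, update_comp_swap]

lemma aeval_update_lin_self (v w : I × ℕ) :
    aeval (R := F) (Function.update (X : I × ℕ → MvPolynomial (I × ℕ) F) v (X w))
      (X v - X w) = 0 := by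
  rcases eq_or_ne w v with rfl | hwv
  · simp
  · rw [map_sub, aeval_X, aeval_X, Function.update_self, Function.update_of_ne hwv, sub_self]

lemma dvd_of_aeval_update_eq_zero (v w : I × ℕ) (P : MvPolynomial (I × ℕ) F)
    (h : aeval (Function.update (X : I × ℕ → MvPolynomial (I × ℕ) F) v (X w)) P = 0) :
    (X v - X w : MvPolynomial (I × ℕ) F) ∣ P := by
  set Idl := Ideal.span {(X v - X w : MvPolynomial (I × ℕ) F)} with hIdl
  have key : (Ideal.Quotient.mk Idl).comp
      ((aeval (R := F) (Function.update (X : I × ℕ → MvPolynomial (I × ℕ) F) v (X w))).toRingHom)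
      = Ideal.Quotient.mk Idl := by
    apply ringHom_ext
    · intro r
      simp
    · intro u
      simp only [RingHom.comp_apply, AlgHom.toRingHom_eq_coe, RingHom.coe_coe, aeval_X]
      rcases eq_or_ne u v with rfl | huv
      · rw [Function.update_self, Ideal.Quotient.mk_eq_mk_iff_sub_mem]
        rw [hIdl, Ideal.mem_span_singleton]
        exact ⟨-1, by ring⟩
      · rw [Function.update_of_ne huv]
  have h2 : Ideal.Quotient.mk Idl P = 0 := by
    have := congrArg (fun f => f P) key
    simp only [RingHom.comp_apply, AlgHom.toRingHom_eq_coe, RingHom.coe_coe] at this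
    rw [← this, h, map_zero]
  rw [← Ideal.mem_span_singleton]
  exact (Ideal.Quotient.eq_zero_iff_mem).1 h2

lemma lin_X_prime (v w : I × ℕ) (hvw : v ≠ w) :
    Prime (X v - X w : MvPolynomial (I × ℕ) F) := by
  set φ := aeval (R := F) (Function.update (X : I × ℕ → MvPolynomial (I × ℕ) F) v (X w))
  have hφ0 : φ (X v - X w) = 0 := aeval_update_lin_self F I v w
  refine ⟨?_, ?_, ?_⟩
  · rw [sub_ne_zero]
    exact fun h => hvw (X_injective h)
  · intro hu
    have := hu.map φ
    rw [hφ0] at this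
    exact not_isUnit_zero this
  · intro p q hpq
    obtain ⟨c, hc⟩ := hpq
    have : φ p * φ q = 0 := by
      rw [← map_mul, hc, map_mul, hφ0, zero_mul]
    rcases mul_eq_zero.1 this with h | h
    · exact Or.inl (dvd_of_aeval_update_eq_zero F I v w p h)
    · exact Or.inr (dvd_of_aeval_update_eq_zero F I v w q h)

lemma lin_prime (i : I) {p : ℕ × ℕ} (hp : p.1 ≠ p.2) : Prime (lin F I i p) :=
  lin_X_prime F I (i, p.2) (i, p.1) (by simp [Prod.ext_iff]; omega)

lemma lin_not_dvd (i j : I) (p q : ℕ × ℕ) (hp : p.1 < p.2) (hq : q.1 < q.2)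
    (hne : (⟨i, p⟩ : I × (ℕ × ℕ)) ≠ ⟨j, q⟩) :
    ¬ (lin F I i p ∣ lin F I j q) := by
  rintro ⟨c, hc⟩
  set v : I × ℕ := (i, p.2)
  set w : I × ℕ := (i, p.1)
  set φ := aeval (R := F) (Function.update (X : I × ℕ → MvPolynomial (I × ℕ) F) v (X w))
  have hφ0 : φ (lin F I i p) = 0 := aeval_update_lin_self F I v w
  have h0 : φ (lin F I j q) = 0 := by rw [hc, map_mul, hφ0, zero_mul]
  rw [lin, map_sub, aeval_X, aeval_X] at h0
  rw [sub_eq_zero] at h0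
  by_cases h1 : ((j, q.2) : I × ℕ) = v <;> by_cases h2 : ((j, q.1) : I × ℕ) = v
  · have e1 : ((j, q.2) : I × ℕ) = (j, q.1) := h1.trans h2.symm
    simp only [Prod.mk.injEq] at e1
    omega
  · rw [Function.update_apply, if_pos h1, Function.update_apply, if_neg h2] at h0
    have := X_injective h0
    simp only [v, w, Prod.mk.injEq] at h1 this
    apply hne
    simp only [Prod.ext_iff, Prod.mk.injEq]
    exact ⟨this.1, this.2, h1.2.symm⟩
  · rw [Function.update_apply, if_neg h1, Function.update_apply, if_pos h2] at h0
    have := X_injective h0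
    simp only [v, w, Prod.mk.injEq] at h2 this
    omega
  · rw [Function.update_apply, if_neg h1, Function.update_apply, if_neg h2] at h0
    have := X_injective h0
    simp only [Prod.mk.injEq] at this
    omega

lemma prod_dvd_of_forall {α : Type} [DecidableEq α] {s : Finset α}
    {g : α → MvPolynomial (I × ℕ) F} {P : MvPolynomial (I × ℕ) F}
    (hprime : ∀ x ∈ s, Prime (g x))
    (hdist : ∀ x ∈ s, ∀ y ∈ s, x ≠ y → ¬ g x ∣ g y)
    (hdvd : ∀ x ∈ s, g x ∣ P) : (∏ x ∈ s, g x) ∣ P := by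
  induction s using Finset.cons_induction generalizing P with
  | empty => simp
  | cons x s hx ih =>
    obtain ⟨Q, rfl⟩ := ih (fun y hy => hprime y (Finset.mem_cons.2 (Or.inr hy)))
      (fun y hy z hz hyz => hdist y (Finset.mem_cons.2 (Or.inr hy)) z (Finset.mem_cons.2 (Or.inr hz)) hyz)
      (fun y hy => hdvd y (Finset.mem_cons.2 (Or.inr hy)))
    have hgx : g x ∣ (∏ y ∈ s, g y) * Q := hdvd x (Finset.mem_cons_self x s)
    rcases (hprime x (Finset.mem_cons_self x s)).2.2 _ _ hgx with h | h
    · obtain ⟨y, hy, hxy⟩ := (hprime x (Finset.mem_cons_self x s)).exists_mem_finset_dvd h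
      exact absurd hxy (hdist x (Finset.mem_cons_self x s) y (Finset.mem_cons.2 (Or.inr hy))
        (fun hxy' => hx (hxy' ▸ hy)))
    · obtain ⟨c, rfl⟩ := h
      exact ⟨c, by rw [Finset.prod_cons]; ring⟩

lemma mem_supported_of_mul_mem {S : Set (I × ℕ)} {A B : MvPolynomial (I × ℕ) F}
    (hA0 : A ≠ 0) (hA : A ∈ supported F S) (hAB : A * B ∈ supported F S) :
    B ∈ supported F S := by
  rw [supported_eq_range_rename] at hA hAB ⊢
  obtain ⟨A', hA'⟩ := hA
  obtain ⟨C', hC'⟩ := hAB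
  simp only [AlgHom.toRingHom_eq_coe, RingHom.coe_coe] at hA' hC'
  set k := killCompl (R := F) (Subtype.val_injective (p := (· ∈ S)))
  have hk : ∀ Q : MvPolynomial S F, k (rename Subtype.val Q) = Q := fun Q =>
    AlgHom.congr_fun (killCompl_comp_rename (R := F)
      (Subtype.val_injective (p := (· ∈ S)))) Q
  have hkA : rename Subtype.val (k A) = A := by rw [← hA', hk]
  have hkAB : rename Subtype.val (k (A * B)) = A * B := by rw [← hC', hk]
  have : A * rename Subtype.val (k B) = A * B := by
    conv_lhs => rw [← hkA]
    rw [← map_mul, ← map_mul, hkAB]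
  exact ⟨k B, mul_left_cancel₀ hA0 this⟩

end ShuffleAuxG
section ShuffleAuxH
set_option maxHeartbeats 1000000

lemma permOf_color (N : I → ℕ) (σ : ∀ i, Equiv.Perm (Fin (N i))) :
    ∀ p : I × ℕ, ((permOf I N σ) p).1 = p.1 := fun _ => rfl

lemma permOf_fix (N : I → ℕ) (σ : ∀ i, Equiv.Perm (Fin (N i))) :
    ∀ p : I × ℕ, N p.1 ≤ p.2 → (permOf I N σ) p = p := by
  rintro ⟨i, c⟩ hp
  simp only at hp
  show ((i : I), if h : c < N i then _ else c) = (i, c)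
  rw [dif_neg (by omega)]

lemma permOf_trans (N : I → ℕ) (σ τ : ∀ i, Equiv.Perm (Fin (N i))) :
    (permOf I N σ).trans (permOf I N τ) = permOf I N (fun i => τ i * σ i) := by
  apply Equiv.ext
  rintro ⟨i, c⟩
  show (permOf I N τ) ((permOf I N σ) (i, c)) = _
  by_cases h : c < N i
  · have e1 : (permOf I N σ) (i, c) = (i, ((σ i ⟨c, h⟩ : Fin (N i)) : ℕ)) := by
      show ((i : I), dite _ _ _) = _
      rw [dif_pos h]
    have h2 : ((σ i ⟨c, h⟩ : Fin (N i)) : ℕ) < N i := (σ i ⟨c, h⟩).2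
    rw [e1]
    show ((i : I), dite _ _ _) = ((i : I), dite _ _ _)
    rw [dif_pos h2, dif_pos h]
    have e2 : (⟨((σ i ⟨c, h⟩ : Fin (N i)) : ℕ), h2⟩ : Fin (N i)) = σ i ⟨c, h⟩ := Fin.eta _ _
    rw [e2]
    rfl
  · have e1 : (permOf I N σ) (i, c) = (i, c) := permOf_fix I N σ (i, c) (by simpa using h)
    rw [e1, permOf_fix I N τ (i, c) (by simpa using h),
      permOf_fix I N (fun i => τ i * σ i) (i, c) (by simpa using h)]

lemma exists_permOf (N : I → ℕ) (e : (I × ℕ) ≃ (I × ℕ))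
    (hc : ∀ p : I × ℕ, (e p).1 = p.1) (hf : ∀ p : I × ℕ, N p.1 ≤ p.2 → e p = p) :
    ∃ σ : ∀ i, Equiv.Perm (Fin (N i)), e = permOf I N σ := by
  have hcs : ∀ p : I × ℕ, (e.symm p).1 = p.1 := by
    intro p
    conv_rhs => rw [← e.apply_symm_apply p]
    exact (hc (e.symm p)).symm
  have hfs : ∀ p : I × ℕ, N p.1 ≤ p.2 → e.symm p = p := by
    intro p hp
    conv_lhs => rw [← hf p hp]
    exact e.symm_apply_apply p
  refine ⟨fun i => ⟨fun x => ⟨colMap I e i x, colMap_lt I N e hc hf i x.2⟩,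
    fun x => ⟨colMap I e.symm i x, colMap_lt I N e.symm hcs hfs i x.2⟩, ?_, ?_⟩, ?_⟩
  · intro x
    ext
    exact (colMap_symm I e hc i x).1
  · intro x
    ext
    exact (colMap_symm I e hc i x).2
  · apply Equiv.ext
    rintro ⟨i, c⟩
    show e (i, c) = ((i : I), dite _ _ _)
    by_cases h : c < N i
    · rw [dif_pos h]
      exact colMap_spec I e hc i c
    · rw [dif_neg h]
      exact hf (i, c) (by simpa using h)

lemma permHom_mem_Laurent (N : I → ℕ) (e : (I × ℕ) ≃ (I × ℕ))
    (hc : ∀ p : I × ℕ, (e p).1 = p.1) (hf : ∀ p : I × ℕ, N p.1 ≤ p.2 → e p = p)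
    {x : KK F I} (hx : x ∈ LaurentIn F I N) : permHom F I e x ∈ LaurentIn F I N := by
  refine algHom_mem_Laurent F I (permAlg F I e) ?_ hx
  intro i a ha
  constructor
  · rw [permAlg_apply, permHom_zVar, colMap_spec I e hc]
    exact zVar_mem F I N (colMap_lt I N e hc hf i ha)
  · rw [permAlg_apply, map_inv₀, permHom_zVar, colMap_spec I e hc]
    exact zVar_inv_mem F I N (colMap_lt I N e hc hf i ha)

lemma permHom_symm_sum (N : I → ℕ) (x0 : KK F I) (τ : ∀ i, Equiv.Perm (Fin (N i))) :
    permHom F I (permOf I N τ) (∑ σ : ∀ i, Equiv.Perm (Fin (N i)),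
        permHom F I (permOf I N σ) x0)
      = ∑ σ : ∀ i, Equiv.Perm (Fin (N i)), permHom F I (permOf I N σ) x0 := by
  rw [map_sum]
  rw [Finset.sum_congr rfl (fun σ _ => by
    rw [permHom_comp_apply, permOf_trans])]
  exact Equiv.sum_comp (Equiv.piCongrRight (fun i => Equiv.mulLeft (τ i)))
    (fun σ => permHom F I (permOf I N σ) x0)

end ShuffleAuxH
section ShuffleFinal
set_option maxHeartbeats 2000000

lemma permHom_natCast_inv (e : (I × ℕ) ≃ (I × ℕ)) (k : ℕ) :
    permHom F I e ((k : KK F I))⁻¹ = ((k : KK F I))⁻¹ := by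
  rw [map_inv₀, map_natCast]

lemma natCast_inv_mem (N : I → ℕ) (k : ℕ) : ((k : KK F I))⁻¹ ∈ LaurentIn F I N := by
  have h : ((k : KK F I)) = algebraMap F (KK F I) (k : F) := by
    rw [map_natCast]
  rw [h, ← map_inv₀]
  exact Subalgebra.algebraMap_mem _ _

lemma monomial_inv_mem (N : I → ℕ) (M : (I × ℕ) →₀ ℕ) (hM : ∀ v ∈ M.support, v.2 < N v.1) :
    (algebraMap (MvPolynomial (I × ℕ) F) (KK F I) (monomial M 1))⁻¹ ∈ LaurentIn F I N := by
  have h1 : (monomial M (1 : F)) = ∏ v ∈ M.support, (X v) ^ (M v) := by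
    rw [monomial_eq, C_1, one_mul, Finsupp.prod]
  rw [h1, map_prod, ← Finset.prod_inv_distrib]
  refine Subalgebra.prod_mem _ fun v hv => ?_
  rw [map_pow, ← inv_pow]
  exact pow_mem (zVar_inv_mem F I N (hM v hv)) _

lemma symm_props (N : I → ℕ) (e : (I × ℕ) ≃ (I × ℕ))
    (hc : ∀ p : I × ℕ, (e p).1 = p.1) (hf : ∀ p : I × ℕ, N p.1 ≤ p.2 → e p = p) :
    (∀ p : I × ℕ, (e.symm p).1 = p.1) ∧ (∀ p : I × ℕ, N p.1 ≤ p.2 → e.symm p = p) := by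
  constructor
  · intro p
    conv_rhs => rw [← e.apply_symm_apply p]
    exact (hc (e.symm p)).symm
  · intro p hp
    conv_lhs => rw [← hf p hp]
    exact e.symm_apply_apply p

/-- The shuffle product of two symmetric Laurent polynomials is again a
symmetric Laurent polynomial (all apparent simple poles cancel upon symmetrization). -/
theorem shuffle_product_mem
    (src tgt : E → I) (q : F) (tp : E → F)
    (n n' : I → ℕ) (f g : KK F I)
    (hf : f ∈ LaurentIn F I n) (hfs : SymIn F I n f)
    (hg : g ∈ LaurentIn F I n') (hgs : SymIn F I n' g) :
    shufMul F I E src tgt q tp n n' f g ∈ LaurentIn F I (fun i => n i + n' i) ∧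
    SymIn F I (fun i => n i + n' i) (shufMul F I E src tgt q tp n n' f g) := by
  classical
  set x0 : KK F I := f * shiftHom F I n g * shufKernel F I E src tgt q tp n n' with hx0
  set S0 : KK F I := ∑ σ : ∀ i, Equiv.Perm (Fin (n i + n' i)),
    permHom F I (permOf I (fun i => n i + n' i) σ) x0 with hS0
  have hmul : shufMul F I E src tgt q tp n n' f g
      = ((∏ i : I, ((n i).factorial * (n' i).factorial) : ℕ) : KK F I)⁻¹ * S0 := rfl
  -- symmetry of S0
  have hS0sym : ∀ e : (I × ℕ) ≃ (I × ℕ), (∀ p : I × ℕ, (e p).1 = p.1) →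
      (∀ p : I × ℕ, n p.1 + n' p.1 ≤ p.2 → e p = p) → permHom F I e S0 = S0 := by
    intro e hce hfe
    obtain ⟨τ, rfl⟩ := exists_permOf I (fun i => n i + n' i) e hce hfe
    exact permHom_symm_sum F I (fun i => n i + n' i) x0 τ
  have hSymOut : SymIn F I (fun i => n i + n' i) (shufMul F I E src tgt q tp n n' f g) := by
    intro e hce hfe
    rw [hmul, map_mul, permHom_natCast_inv, hS0sym e hce hfe]
  refine ⟨?_, hSymOut⟩
  -- Laurent membership
  have hfN : f ∈ LaurentIn F I (fun i => n i + n' i) :=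
    LaurentIn_mono F I (fun i => Nat.le_add_right _ _) hf
  have hgN : shiftHom F I n g ∈ LaurentIn F I (fun i => n i + n' i) := by
    refine algHom_mem_Laurent F I (shiftAlg F I n) ?_ hg
    intro i a ha
    constructor
    · show shiftHom F I n (zVar F I (i, a)) ∈ _
      rw [shiftHom_zVar]
      exact zVar_mem F I _ (by simp; omega)
    · show shiftHom F I n ((zVar F I (i, a))⁻¹) ∈ _
      rw [map_inv₀, shiftHom_zVar]
      exact zVar_inv_mem F I _ (by simp; omega)
  have hW : algebraMap (MvPolynomial (I × ℕ) F) (KK F I) (Wpoly F I n n')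
      ∈ LaurentIn F I (fun i => n i + n' i) := by
    refine iota_supported_mem F I _ ?_
    have := Wpoly_mem_supported F I n n'
    convert this using 2
  have hxV : x0 * algebraMap (MvPolynomial (I × ℕ) F) (KK F I)
      (Vand F I (fun i => n i + n' i)) ∈ LaurentIn F I (fun i => n i + n' i) := by
    have heq : x0 * algebraMap (MvPolynomial (I × ℕ) F) (KK F I)
        (Vand F I (fun i => n i + n' i))
        = (f * shiftHom F I n g) *
            algebraMap (MvPolynomial (I × ℕ) F) (KK F I) (Wpoly F I n n') *
          (shufKernel F I E src tgt q tp n n' *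
            algebraMap (MvPolynomial (I × ℕ) F) (KK F I) (Dpoly F I n n')) := by
      rw [hx0, Vand_eq, map_mul]
      ring
    rw [heq]
    exact mul_mem (mul_mem (mul_mem hfN hgN) hW)
      (kernel_mul_Dpoly_mem F I E src tgt q tp n n')
  have hterm : ∀ σ : ∀ i, Equiv.Perm (Fin (n i + n' i)),
      permHom F I (permOf I (fun i => n i + n' i) σ) x0 *
        algebraMap (MvPolynomial (I × ℕ) F) (KK F I) (Vand F I (fun i => n i + n' i))
        ∈ LaurentIn F I (fun i => n i + n' i) := by
    intro σ
    have hc1 := permOf_color I (fun i => n i + n' i) σ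
    have hf1 := permOf_fix I (fun i => n i + n' i) σ
    obtain ⟨hcs, hfs'⟩ := symm_props I (fun i => n i + n' i) _ hc1 hf1
    obtain ⟨ε, hε, hrn⟩ := rename_Vand_sign F I (fun i => n i + n' i)
      (permOf I (fun i => n i + n' i) σ).symm hcs hfs'
    have hx2 : x0 * algebraMap (MvPolynomial (I × ℕ) F) (KK F I)
        (rename (permOf I (fun i => n i + n' i) σ).symm (Vand F I (fun i => n i + n' i)))
        ∈ LaurentIn F I (fun i => n i + n' i) := by
      rw [hrn, map_mul]
      rcases hε with rfl | rfl
      · rw [map_one, one_mul]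
        exact hxV
      · have hneg : x0 * (algebraMap (MvPolynomial (I × ℕ) F) (KK F I) (-1) *
            algebraMap (MvPolynomial (I × ℕ) F) (KK F I)
              (Vand F I (fun i => n i + n' i)))
            = -(x0 * algebraMap (MvPolynomial (I × ℕ) F) (KK F I)
                (Vand F I (fun i => n i + n' i))) := by
          rw [map_neg, map_one]
          ring
        rw [hneg]
        exact neg_mem hxV
    have hm := permHom_mem_Laurent F I (fun i => n i + n' i)
      (permOf I (fun i => n i + n' i) σ) hc1 hf1 hx2
    rwa [map_mul, permHom_iota, rename_rename, Equiv.self_comp_symm, rename_id] at hm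
  have hSV : S0 * algebraMap (MvPolynomial (I × ℕ) F) (KK F I)
      (Vand F I (fun i => n i + n' i)) ∈ LaurentIn F I (fun i => n i + n' i) := by
    rw [hS0, Finset.sum_mul]
    exact sum_mem fun σ _ => hterm σ
  obtain ⟨P0, M, hP0supp, hMsupp, helim⟩ := laurent_elim F I (fun i => n i + n' i) hSV
  -- divisibility of P0 by each linear factor
  have hdvd : ∀ i : I, ∀ p ∈ pairsC I (fun i => n i + n' i) i, lin F I i p ∣ P0 := by
    intro i p hp
    have hp' : p.1 < n i + n' i ∧ p.2 < n i + n' i ∧ p.1 < p.2 := by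
      simp only [pairsC, Finset.mem_filter, Finset.mem_product, Finset.mem_range] at hp
      exact ⟨hp.1.1, hp.1.2, hp.2⟩
    set v : I × ℕ := (i, p.2) with hv
    set w : I × ℕ := (i, p.1) with hw
    set sw : (I × ℕ) ≃ (I × ℕ) := Equiv.swap v w with hsw
    have hswc : ∀ pt : I × ℕ, (sw pt).1 = pt.1 := by
      rw [hsw, Equiv.swap_comm]
      exact swap_color_preserving I i p.1 p.2
    have hswf : ∀ pt : I × ℕ, n pt.1 + n' pt.1 ≤ pt.2 → sw pt = pt := by
      rw [hsw, Equiv.swap_comm]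
      exact swap_fixes I (fun i => n i + n' i) i p.1 p.2 hp'.1 hp'.2.1
    have hswS : permHom F I sw S0 = S0 := hS0sym sw hswc hswf
    have hswV : rename sw (Vand F I (fun i => n i + n' i))
        = - Vand F I (fun i => n i + n' i) := by
      rw [hsw, Equiv.swap_comm]
      exact rename_swap_Vand F I (fun i => n i + n' i) i p.1 p.2 hp'.2.2 hp'.2.1
    -- apply permHom sw to helim
    have h2 : S0 * algebraMap (MvPolynomial (I × ℕ) F) (KK F I)
          (- Vand F I (fun i => n i + n' i)) *
        algebraMap (MvPolynomial (I × ℕ) F) (KK F I) (rename sw (monomial M 1))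
        = algebraMap (MvPolynomial (I × ℕ) F) (KK F I) (rename sw P0) := by
      have := congrArg (permHom F I sw) helim
      rwa [map_mul, map_mul, hswS, permHom_iota, permHom_iota, permHom_iota, hswV] at this
    -- combine
    have h3 : algebraMap (MvPolynomial (I × ℕ) F) (KK F I) (P0 * rename sw (monomial M 1))
        = algebraMap (MvPolynomial (I × ℕ) F) (KK F I) (- (rename sw P0 * monomial M 1)) := by
      rw [map_mul, map_neg, map_mul, ← helim, ← h2]
      rw [map_neg]
      ring
    have h4 : P0 * rename sw (monomial M 1) = - (rename sw P0 * monomial M 1) :=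
      IsFractionRing.injective (MvPolynomial (I × ℕ) F) (KK F I) h3
    -- evaluate at z_v = z_w
    set φ := aeval (R := F) (Function.update (X : I × ℕ → MvPolynomial (I × ℕ) F) v (X w))
      with hφ
    have h5 := congrArg φ h4
    rw [map_mul, map_neg, map_mul] at h5
    have hφs : ∀ P : MvPolynomial (I × ℕ) F, φ (rename sw P) = φ P := fun P =>
      aeval_update_rename_swap F I v w P
    rw [hφs, hφs] at h5
    have hφm : φ (monomial M (1 : F)) ≠ 0 := by
      rw [hφ, aeval_monomial, map_one, one_mul, Finsupp.prod]
      apply Finset.prod_ne_zero_iff.2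
      intro u _
      apply pow_ne_zero
      rw [Function.update_apply]
      split <;> exact X_ne_zero _
    have h6 : (2 : MvPolynomial (I × ℕ) F) * (φ P0 * φ (monomial M 1)) = 0 := by
      rw [two_mul]
      nth_rewrite 1 [h5]
      ring
    have h7 : φ P0 * φ (monomial M 1) = 0 := by
      rcases mul_eq_zero.1 h6 with h | h
      · exact absurd h two_ne_zero
      · exact h
    have h8 : φ P0 = 0 := by
      rcases mul_eq_zero.1 h7 with h | h
      · exact h
      · exact absurd h hφm
    exact dvd_of_aeval_update_eq_zero F I v w P0 h8
  -- product divisibility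
  have hVdvd : Vand F I (fun i => n i + n' i) ∣ P0 := by
    have hVs : Vand F I (fun i => n i + n' i)
        = ∏ x ∈ Finset.univ.sigma (fun i => pairsC I (fun i => n i + n' i) i),
            lin F I x.1 x.2 := by
      rw [Finset.prod_sigma, Vand]
    rw [hVs]
    refine prod_dvd_of_forall F I ?_ ?_ ?_
    · rintro ⟨i, p⟩ hx
      simp only [Finset.mem_sigma, Finset.mem_univ, true_and, pairsC, Finset.mem_filter] at hx
      exact lin_prime F I i (Nat.ne_of_lt hx.2)
    · rintro ⟨i, p⟩ hx ⟨j, r⟩ hy hne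
      simp only [Finset.mem_sigma, Finset.mem_univ, true_and, pairsC,
        Finset.mem_filter] at hx hy
      refine lin_not_dvd F I i j p r hx.2 hy.2 ?_
      intro hcon
      apply hne
      rw [Prod.ext_iff] at hcon
      obtain ⟨h1, h2⟩ := hcon
      subst h1
      simp only [heq_eq_eq]
      exact Sigma.ext rfl (heq_of_eq h2)
    · rintro ⟨i, p⟩ hx
      simp only [Finset.mem_sigma, Finset.mem_univ, true_and] at hx
      exact hdvd i p hx
  obtain ⟨Q, hQ⟩ := hVdvd
  have hQsupp : Q ∈ supported F {val : I × ℕ | val.2 < n val.1 + n' val.1} := by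
    refine mem_supported_of_mul_mem F I (Vand_ne_zero F I (fun i => n i + n' i)) ?_ ?_
    · have := Vand_mem_supported F I (fun i => n i + n' i)
      convert this using 2
    · rw [← hQ]
      convert hP0supp using 2
  -- now S0 = ι Q / ι (monomial M 1)
  have hVne : algebraMap (MvPolynomial (I × ℕ) F) (KK F I)
      (Vand F I (fun i => n i + n' i)) ≠ 0 := by
    rw [ne_eq, map_eq_zero_iff _ (IsFractionRing.injective _ _)]
    exact Vand_ne_zero F I _
  have hmne : algebraMap (MvPolynomial (I × ℕ) F) (KK F I) (monomial M (1 : F)) ≠ 0 := by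
    rw [ne_eq, map_eq_zero_iff _ (IsFractionRing.injective _ _)]
    intro hcon
    have := congrArg (fun P => coeff M P) hcon
    simpa using this
  have hS0Q : S0 = algebraMap (MvPolynomial (I × ℕ) F) (KK F I) Q *
      (algebraMap (MvPolynomial (I × ℕ) F) (KK F I) (monomial M 1))⁻¹ := by
    have h1 : algebraMap (MvPolynomial (I × ℕ) F) (KK F I)
          (Vand F I (fun i => n i + n' i)) * (S0 *
        algebraMap (MvPolynomial (I × ℕ) F) (KK F I) (monomial M 1))
        = algebraMap (MvPolynomial (I × ℕ) F) (KK F I)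
            (Vand F I (fun i => n i + n' i)) *
          algebraMap (MvPolynomial (I × ℕ) F) (KK F I) Q := by
      rw [← map_mul, ← hQ, ← helim]
      ring
    have h2 : S0 * algebraMap (MvPolynomial (I × ℕ) F) (KK F I) (monomial M 1)
        = algebraMap (MvPolynomial (I × ℕ) F) (KK F I) Q := mul_left_cancel₀ hVne h1
    field_simp [hmne, ← h2]
    exact h2
  have hQmem : algebraMap (MvPolynomial (I × ℕ) F) (KK F I) Q
      ∈ LaurentIn F I (fun i => n i + n' i) := by
    refine iota_supported_mem F I _ ?_
    convert hQsupp using 2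
  have hS0mem : S0 ∈ LaurentIn F I (fun i => n i + n' i) := by
    rw [hS0Q]
    exact mul_mem hQmem (monomial_inv_mem F I (fun i => n i + n' i) M hMsupp)
  rw [hmul]
  exact mul_mem (natCast_inv_mem F I (fun i => n i + n' i) _) hS0mem

end ShuffleFinal

end
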